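/- Let G = (V,E) be a finite simple graph and x : V → ℝ^K a framework. If (G,x) is infinitesimally rigid — i.e., every v : V → ℝ^K satisfying ⟨x_u − x_w, v_u − v_w⟩ = 0 for all edges {u,w} ∈ E is a trivial infinitesimal motion — then (G,x) is rigid: there exists ε > 0 such that every x' : V → ℝ^K with ‖x'_u − x_u‖ < ε for all u ∈ V and ‖x'_u − x'_v‖ = ‖x_u − x_v‖ for all edges {u,v} ∈ E satisfies ‖x'_u − x'_v‖ = ‖x_u − x_v‖ for ALL pairs u, v ∈ V. -/

import Mathlib

open scoped RealInnerProductSpace Matrix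

namespace RigidAux

open Matrix NormedSpace

section

attribute [local instance] Matrix.linftyOpNormedAddCommGroup Matrix.linftyOpNormedSpace
  Matrix.linftyOpNormedRing Matrix.linftyOpNormedAlgebra

variable {K : ℕ}

local notation "E" => EuclideanSpace ℝ (Fin K)
local notation "M" => Matrix (Fin K) (Fin K) ℝ

lemma toEL_mul (A B : M) (y : E) :
    Matrix.toEuclideanLin (A * B) y = Matrix.toEuclideanLin A (Matrix.toEuclideanLin B y) := by
  ext i
  simp [Matrix.toEuclideanLin_apply, ← Matrix.mulVec_mulVec]

lemma toEL_one (y : E) : Matrix.toEuclideanLin (1 : M) y = y := by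
  ext i
  simp [Matrix.toEuclideanLin_apply]

lemma norm_toEL_orth {Q : M} (hQ : Qᵀ * Q = 1) (a : E) :
    ‖Matrix.toEuclideanLin Q a‖ = ‖a‖ := by
  have hQ' : Qᴴ * Q = 1 := by
    rwa [Matrix.conjTranspose_eq_transpose_of_trivial]
  have key : ⟪Matrix.toEuclideanLin Q a, Matrix.toEuclideanLin Q a⟫ = ⟪a, a⟫ := by
    calc ⟪Matrix.toEuclideanLin Q a, Matrix.toEuclideanLin Q a⟫
        = ⟪(LinearMap.adjoint (Matrix.toEuclideanLin Q)) (Matrix.toEuclideanLin Q a), a⟫ := by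
          rw [LinearMap.adjoint_inner_left]
      _ = ⟪(Matrix.toEuclideanLin Qᴴ) (Matrix.toEuclideanLin Q a), a⟫ := by
          rw [Matrix.toEuclideanLin_conjTranspose_eq_adjoint]
      _ = ⟪a, a⟫ := by rw [← toEL_mul, hQ', toEL_one]
  rw [norm_eq_sqrt_real_inner, norm_eq_sqrt_real_inner (x := a), key]

noncomputable def transposeCLM : Matrix (Fin K) (Fin K) ℝ →L[ℝ] Matrix (Fin K) (Fin K) ℝ :=
  LinearMap.toContinuousLinearMap
    { toFun := fun Y => Yᵀ
      map_add' := fun a b => Matrix.transpose_add a b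
      map_smul' := fun c a => Matrix.transpose_smul c a }

lemma exp_transpose' (X : M) : (exp X)ᵀ = exp Xᵀ := by
  haveI : CompleteSpace (Matrix (Fin K) (Fin K) ℝ) := FiniteDimensional.complete ℝ _
  have hs : Summable fun n : ℕ => (((n.factorial) : ℝ)⁻¹) • X ^ n := expSeries_summable' (𝕂 := ℝ) X
  calc (exp X)ᵀ = transposeCLM (∑' n : ℕ, (((n.factorial) : ℝ)⁻¹) • X ^ n) := by
        rw [exp_eq_tsum ℝ]; rfl
    _ = ∑' n : ℕ, transposeCLM ((((n.factorial) : ℝ)⁻¹) • X ^ n) := transposeCLM.map_tsum hs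
    _ = ∑' n : ℕ, (((n.factorial) : ℝ)⁻¹) • (Xᵀ) ^ n := by
        refine tsum_congr fun n => ?_
        show ((((n.factorial) : ℝ)⁻¹) • X ^ n)ᵀ = (((n.factorial) : ℝ)⁻¹) • (Xᵀ) ^ n
        rw [Matrix.transpose_smul, Matrix.transpose_pow]
    _ = exp Xᵀ := by rw [exp_eq_tsum ℝ]

lemma exp_orth {A : M} (hA : Aᵀ = -A) (s : ℝ) :
    (exp (s • A))ᵀ * exp (s • A) = 1 := by
  haveI : CompleteSpace (Matrix (Fin K) (Fin K) ℝ) := FiniteDimensional.complete ℝ _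
  have h1 : (exp (s • A))ᵀ = exp (-(s • A)) := by
    rw [exp_transpose', Matrix.transpose_smul, hA, smul_neg]
  rw [h1, ← Matrix.exp_add_of_commute _ _ ((Commute.refl (s • A)).neg_left), neg_add_cancel, exp_zero]

noncomputable def applyE (y : E) : M →L[ℝ] E :=
  LinearMap.toContinuousLinearMap
    { toFun := fun Q => Matrix.toEuclideanLin Q y
      map_add' := fun a b => by simp
      map_smul' := fun c a => by simp }

lemma hasDerivAt_expE (A : M) (y : E) :
    HasDerivAt (fun s : ℝ => Matrix.toEuclideanLin (exp (s • A)) y)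
      (Matrix.toEuclideanLin A y) 0 := by
  haveI : CompleteSpace (Matrix (Fin K) (Fin K) ℝ) := FiniteDimensional.complete ℝ _
  have h := hasDerivAt_exp_smul_const (𝕂 := ℝ) A (0 : ℝ)
  rw [zero_smul, exp_zero, one_mul] at h
  exact (applyE y).hasFDerivAt.comp_hasDerivAt 0 h

variable {V : Type*} [Fintype V]

/-- Optimal translation. -/
noncomputable def crep (x x' : V → E) (Q : M) : E :=
  ((Fintype.card V : ℝ))⁻¹ • ∑ w, (x w - Matrix.toEuclideanLin Q (x' w))

/-- The repositioned framework. -/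
noncomputable def zrep (x x' : V → E) (Q : M) (u : V) : E :=
  Matrix.toEuclideanLin Q (x' u) + crep x x' Q

/-- Squared distance to the original framework. -/
noncomputable def Hfun (x x' : V → E) (Q : M) : ℝ :=
  ∑ u, ‖zrep x x' Q u - x u‖ ^ 2

lemma zrep_dist {Q : M} (hQ : Qᵀ * Q = 1) (x x' : V → E) (u w : V) :
    ‖zrep x x' Q u - zrep x x' Q w‖ = ‖x' u - x' w‖ := by
  have h6 : zrep x x' Q u - zrep x x' Q w = Matrix.toEuclideanLin Q (x' u - x' w) := by
    simp only [zrep, map_sub]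
    abel
  rw [h6, norm_toEL_orth hQ]

lemma sum_zrep_sub [Nonempty V] (x x' : V → E) (Q : M) :
    ∑ u, (zrep x x' Q u - x u) = 0 := by
  have hN0 : (0 : ℝ) < (Fintype.card V : ℝ) := by exact_mod_cast Fintype.card_pos
  have hsmul : (Fintype.card V : ℝ) • crep x x' Q
      = ∑ w, (x w - Matrix.toEuclideanLin Q (x' w)) := by
    rw [crep, smul_smul, mul_inv_cancel₀ hN0.ne', one_smul]
  have hterm : ∀ u, zrep x x' Q u - x u
      = (Matrix.toEuclideanLin Q (x' u) - x u) + crep x x' Q := by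
    intro u; rw [zrep]; abel
  calc ∑ u, (zrep x x' Q u - x u)
      = ∑ u, (Matrix.toEuclideanLin Q (x' u) - x u) + (Fintype.card V) • crep x x' Q := by
        simp only [hterm, Finset.sum_add_distrib, Finset.sum_const, Finset.card_univ]
    _ = ∑ u, (Matrix.toEuclideanLin Q (x' u) - x u)
        + ∑ w, (x w - Matrix.toEuclideanLin Q (x' w)) := by
        rw [← hsmul, Nat.cast_smul_eq_nsmul ℝ]
    _ = 0 := by
        rw [← Finset.sum_add_distrib]
        simp

lemma stationary [Nonempty V] (x x' : V → E) {Q : M} (hQ : Qᵀ * Q = 1)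
    (hmin : ∀ R : M, Rᵀ * R = 1 → Hfun x x' Q ≤ Hfun x x' R)
    {A : M} (hA : Aᵀ = -A) (b : E) :
    ∑ u, ⟪Matrix.toEuclideanLin A (zrep x x' Q u) + b, zrep x x' Q u - x u⟫ = 0 := by
  have hN0 : (0 : ℝ) < (Fintype.card V : ℝ) := by exact_mod_cast Fintype.card_pos
  set N : ℝ := (Fintype.card V : ℝ) with hNdef
  set y : V → E := fun u => Matrix.toEuclideanLin Q (x' u) with hy
  set g : V → ℝ → E := fun u s =>
    Matrix.toEuclideanLin (exp (s • A)) (y u)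
      + N⁻¹ • ∑ w, (x w - Matrix.toEuclideanLin (exp (s • A)) (y w)) - x u with hg
  set d : V → E := fun u =>
    Matrix.toEuclideanLin A (y u) + N⁻¹ • ∑ w, ((0 : E) - Matrix.toEuclideanLin A (y w))
    with hd
  set φ : ℝ → ℝ := fun s => ∑ u, ⟪g u s, g u s⟫ with hφ
  -- φ s is the distance functional at the rotated frame
  have hφH : ∀ s, φ s = Hfun x x' (exp (s • A) * Q) := by
    intro s
    refine Finset.sum_congr rfl fun u _ => ?_
    rw [real_inner_self_eq_norm_sq]
    congr 1
    simp only [hg, zrep, crep, toEL_mul, hy, hNdef]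
  -- the rotated frames are orthogonal
  have horth : ∀ s : ℝ, (exp (s • A) * Q)ᵀ * (exp (s • A) * Q) = 1 := by
    intro s
    rw [Matrix.transpose_mul, Matrix.mul_assoc, ← Matrix.mul_assoc (exp (s • A))ᵀ,
      exp_orth hA s, Matrix.one_mul, hQ]
  -- local minimum at 0
  have hloc : IsLocalMin φ 0 := by
    refine Filter.Eventually.of_forall fun s => ?_
    rw [hφH, hφH]
    have h0 : exp ((0 : ℝ) • A) * Q = Q := by
      rw [zero_smul, exp_zero, Matrix.one_mul]
    rw [h0]
    exact hmin _ (horth s)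
  -- derivative of φ at 0
  have hgd : ∀ u, HasDerivAt (g u) (d u) 0 := by
    intro u
    have h2 : HasDerivAt
        (fun s : ℝ => ∑ w, (x w - Matrix.toEuclideanLin (exp (s • A)) (y w)))
        (∑ w, ((0 : E) - Matrix.toEuclideanLin A (y w))) 0 :=
      HasDerivAt.fun_sum fun w _ => (hasDerivAt_const 0 (x w)).sub (hasDerivAt_expE A (y w))
    exact ((hasDerivAt_expE A (y u)).add (h2.const_smul N⁻¹)).sub_const (x u)
  have hφd : HasDerivAt φ (∑ u, (⟪g u 0, d u⟫ + ⟪d u, g u 0⟫)) 0 :=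
    HasDerivAt.fun_sum fun u _ => HasDerivAt.inner ℝ (hgd u) (hgd u)
  have hD0 : ∑ u, (⟪g u 0, d u⟫ + ⟪d u, g u 0⟫) = 0 := hloc.hasDerivAt_eq_zero hφd
  -- g u 0 is the displacement
  have hg0 : ∀ u, g u 0 = zrep x x' Q u - x u := by
    intro u
    simp only [hg, zero_smul, exp_zero, toEL_one, zrep, crep, hy, hNdef]
  have hkey : ∑ u, ⟪d u, zrep x x' Q u - x u⟫ = 0 := by
    have h8 : ∀ u, ⟪g u 0, d u⟫ + ⟪d u, g u 0⟫ = 2 * ⟪d u, zrep x x' Q u - x u⟫ := by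
      intro u
      rw [hg0 u, real_inner_comm]
      ring
    have h9 := hD0
    rw [Finset.sum_congr rfl fun u _ => h8 u, ← Finset.mul_sum] at h9
    linarith
  -- pass from d to the general statement
  set e : E := Matrix.toEuclideanLin A (crep x x' Q) + b
      - N⁻¹ • ∑ w, ((0 : E) - Matrix.toEuclideanLin A (y w)) with he
  have hsplit : ∀ u, Matrix.toEuclideanLin A (zrep x x' Q u) + b = d u + e := by
    intro u
    simp only [hd, he, zrep, map_add, hy]
    abel
  calc ∑ u, ⟪Matrix.toEuclideanLin A (zrep x x' Q u) + b, zrep x x' Q u - x u⟫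
      = ∑ u, (⟪d u, zrep x x' Q u - x u⟫ + ⟪e, zrep x x' Q u - x u⟫) := by
        refine Finset.sum_congr rfl fun u _ => ?_
        rw [hsplit u, inner_add_left]
    _ = ∑ u, ⟪d u, zrep x x' Q u - x u⟫ + ⟪e, ∑ u, (zrep x x' Q u - x u)⟫ := by
        rw [Finset.sum_add_distrib, inner_sum]
    _ = 0 := by
        rw [hkey, sum_zrep_sub, inner_zero_right, add_zero]

lemma exists_min [Nonempty V] (x x' : V → E) :
    ∃ Q : M, Qᵀ * Q = 1 ∧ ∀ R : M, Rᵀ * R = 1 → Hfun x x' Q ≤ Hfun x x' R := by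
  haveI : CompleteSpace (Matrix (Fin K) (Fin K) ℝ) := FiniteDimensional.complete ℝ _
  set O : Set (Matrix (Fin K) (Fin K) ℝ) := {Q | Qᵀ * Q = 1} with hO
  have hOc : IsCompact O := by
    refine Metric.isCompact_of_isClosed_isBounded ?_ ?_
    · exact isClosed_eq ((transposeCLM.continuous).mul continuous_id) continuous_const
    · rw [isBounded_iff_forall_norm_le]
      refine ⟨(K : ℝ), fun Q hQ => ?_⟩
      have hent : ∀ i j, ‖Q i j‖₊ ≤ 1 := by
        intro i j
        have h1 : ∑ k, Q k j * Q k j = 1 := by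
          have h2 := congrArg (fun B => B j j) hQ
          simpa [Matrix.mul_apply, Matrix.transpose_apply, Matrix.one_apply] using h2
        have h3 : Q i j * Q i j ≤ 1 := by
          rw [← h1]
          exact Finset.single_le_sum (f := fun k => Q k j * Q k j)
            (fun k _ => mul_self_nonneg _) (Finset.mem_univ i)
        have h4 : |Q i j| ≤ 1 := abs_le_one_iff_mul_self_le_one.mpr h3
        rw [← NNReal.coe_le_coe, coe_nnnorm, Real.norm_eq_abs]
        exact h4
      rw [Matrix.linfty_opNorm_def]
      have h5 : (Finset.univ.sup fun i => ∑ j, ‖Q i j‖₊) ≤ (K : NNReal) := by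
        refine Finset.sup_le fun i _ => ?_
        calc ∑ j, ‖Q i j‖₊ ≤ ∑ _j : Fin K, 1 := Finset.sum_le_sum fun j _ => hent i j
          _ = (K : NNReal) := by simp
      exact_mod_cast h5
  have hO1 : (1 : Matrix (Fin K) (Fin K) ℝ) ∈ O := by simp [hO]
  have base : ∀ y : E, Continuous fun Q : Matrix (Fin K) (Fin K) ℝ =>
      Matrix.toEuclideanLin Q y := fun y => (applyE y).continuous
  have hHcont : Continuous (Hfun x x') := by
    have hccont : Continuous (crep x x') := by
      refine Continuous.const_smul (g := fun Q : M => ∑ w, (x w - Matrix.toEuclideanLin Q (x' w))) ?_ ((Fintype.card V : ℝ))⁻¹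
      exact continuous_finset_sum _ fun w _ => continuous_const.sub (base (x' w))
    refine continuous_finset_sum _ fun u _ => ?_
    exact ((((base (x' u)).add hccont).sub continuous_const).norm).pow 2
  obtain ⟨Q, hQO, hQmin⟩ := hOc.exists_isMinOn ⟨1, hO1⟩ hHcont.continuousOn
  exact ⟨Q, hQO, fun R hR => isMinOn_iff.mp hQmin R hR⟩

lemma Hfun_le [Nonempty V] (x x' : V → E) {Q : M} 
    (hmin : ∀ R : M, Rᵀ * R = 1 → Hfun x x' Q ≤ Hfun x x' R)
    (δ : ℝ) (hδ : ∀ u, ‖x' u - x u‖ ≤ δ) :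
    ∑ u, ‖zrep x x' Q u - x u‖ ^ 2 ≤ 4 * (Fintype.card V : ℝ) * δ ^ 2 := by
  have hN0 : (0 : ℝ) < (Fintype.card V : ℝ) := by exact_mod_cast Fintype.card_pos
  have hδ0 : 0 ≤ δ := le_trans (norm_nonneg _) (hδ (Classical.arbitrary V))
  have h1 : Hfun x x' Q ≤ Hfun x x' 1 := hmin 1 (by simp)
  have hc1 : ‖crep x x' (1 : M)‖ ≤ δ := by
    rw [crep, norm_smul, Real.norm_eq_abs, abs_of_nonneg (inv_nonneg.mpr hN0.le)]
    have h7 : ‖∑ w, (x w - Matrix.toEuclideanLin (1 : M) (x' w))‖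
        ≤ (Fintype.card V : ℝ) * δ := by
      refine le_trans (norm_sum_le _ _) ?_
      rw [← Finset.card_univ]
      have := Finset.sum_le_card_nsmul Finset.univ
        (fun w => ‖x w - Matrix.toEuclideanLin (1 : M) (x' w)‖) δ
        (fun w _ => by rw [toEL_one, norm_sub_rev]; exact hδ w)
      rw [nsmul_eq_mul] at this
      exact_mod_cast this
    calc ((Fintype.card V : ℝ))⁻¹ * ‖∑ w, (x w - Matrix.toEuclideanLin (1 : M) (x' w))‖
        ≤ ((Fintype.card V : ℝ))⁻¹ * ((Fintype.card V : ℝ) * δ) := by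
          exact mul_le_mul_of_nonneg_left h7 (inv_nonneg.mpr hN0.le)
      _ = δ := by field_simp
  have h2 : Hfun x x' (1 : M) ≤ 4 * (Fintype.card V : ℝ) * δ ^ 2 := by
    rw [Hfun]
    have hterm : ∀ u, ‖zrep x x' (1 : M) u - x u‖ ^ 2 ≤ 4 * δ ^ 2 := by
      intro u
      have h8 : ‖zrep x x' (1 : M) u - x u‖ ≤ 2 * δ := by
        have h9 : zrep x x' (1 : M) u - x u = (x' u - x u) + crep x x' (1 : M) := by
          rw [zrep, toEL_one]; abel
        rw [h9]
        calc ‖(x' u - x u) + crep x x' (1 : M)‖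
            ≤ ‖x' u - x u‖ + ‖crep x x' (1 : M)‖ := norm_add_le _ _
          _ ≤ δ + δ := add_le_add (hδ u) hc1
          _ = 2 * δ := by ring
      calc ‖zrep x x' (1 : M) u - x u‖ ^ 2 ≤ (2 * δ) ^ 2 := by
            exact pow_le_pow_left₀ (norm_nonneg _) h8 2
        _ = 4 * δ ^ 2 := by ring
    calc ∑ u, ‖zrep x x' (1 : M) u - x u‖ ^ 2 ≤ ∑ _u : V, 4 * δ ^ 2 :=
          Finset.sum_le_sum fun u _ => hterm u
      _ = (Fintype.card V : ℝ) * (4 * δ ^ 2) := by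
          rw [Finset.sum_const, Finset.card_univ, nsmul_eq_mul]
      _ = 4 * (Fintype.card V : ℝ) * δ ^ 2 := by ring
  exact le_trans h1 h2

end

end RigidAux

theorem rigid_of_infinitesimally_rigid
    (V : Type*) [Fintype V] (K : ℕ) (hK : 0 < K) (G : SimpleGraph V)
    (x : V → EuclideanSpace ℝ (Fin K))
    (hinf : ∀ v : V → EuclideanSpace ℝ (Fin K),
      (∀ u w, G.Adj u w → ⟪x u - x w, v u - v w⟫ = 0) →
      ∃ A : Matrix (Fin K) (Fin K) ℝ, Aᵀ = -A ∧
        ∃ b : EuclideanSpace ℝ (Fin K), ∀ u, ∀ i, v u i = A.mulVec (x u) i + b i) :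
    ∃ ε > (0 : ℝ), ∀ x' : V → EuclideanSpace ℝ (Fin K),
      (∀ u, ‖x' u - x u‖ < ε) →
      (∀ u w, G.Adj u w → ‖x' u - x' w‖ = ‖x u - x w‖) →
      ∀ u w : V, ‖x' u - x' w‖ = ‖x u - x w‖ := by
  classical
  rcases isEmpty_or_nonempty V with hV | hV
  · exact ⟨1, one_pos, fun x' _ _ u w => (IsEmpty.false u).elim⟩
  by_contra hcon
  push_neg at hcon
  have hbad : ∀ n : ℕ, ∃ x' : V → EuclideanSpace ℝ (Fin K),
      (∀ u, ‖x' u - x u‖ ≤ ((n : ℝ) + 1)⁻¹) ∧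
      (∀ u w, G.Adj u w → ‖x' u - x' w‖ = ‖x u - x w‖) ∧
      ∃ u w, ‖x' u - x' w‖ ≠ ‖x u - x w‖ := by
    intro n
    obtain ⟨x', hx1, hx2, hx3⟩ := hcon ((n : ℝ) + 1)⁻¹ (by positivity)
    exact ⟨x', fun u => (hx1 u).le, hx2, hx3⟩
  choose X h1 h2 h3 using hbad
  have hminex : ∀ n : ℕ, ∃ Q : Matrix (Fin K) (Fin K) ℝ, Qᵀ * Q = 1 ∧
      ∀ R : Matrix (Fin K) (Fin K) ℝ, Rᵀ * R = 1 →
        RigidAux.Hfun x (X n) Q ≤ RigidAux.Hfun x (X n) R := fun n =>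
    RigidAux.exists_min x (X n)
  choose Q hQo hQm using hminex
  set z : ℕ → V → EuclideanSpace ℝ (Fin K) := fun n => RigidAux.zrep x (X n) (Q n) with hzdef
  set N : ℝ := (Fintype.card V : ℝ) with hNdef
  have hN0 : (0 : ℝ) < N := by rw [hNdef]; exact_mod_cast Fintype.card_pos
  -- basic properties of the repositioned frameworks
  have hzdist : ∀ n u w, ‖z n u - z n w‖ = ‖X n u - X n w‖ := fun n =>
    RigidAux.zrep_dist (hQo n) x (X n)
  have hsumz : ∀ n, ∑ u, ‖z n u - x u‖ ^ 2 ≤ 4 * N * (((n : ℝ) + 1)⁻¹) ^ 2 := fun n =>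
    RigidAux.Hfun_le x (X n) (hQm n) _ (h1 n)
  have hstat : ∀ n, ∀ A : Matrix (Fin K) (Fin K) ℝ, Aᵀ = -A → ∀ b : EuclideanSpace ℝ (Fin K),
      ∑ u, ⟪Matrix.toEuclideanLin A (z n u) + b, z n u - x u⟫ = 0 := fun n A hA b =>
    RigidAux.stationary x (X n) (hQo n) (hQm n) hA b
  set t : ℕ → ℝ := fun n => ‖z n - x‖ with htdef
  have htpos : ∀ n, 0 < t n := by
    intro n
    have hne : z n ≠ x := by
      intro he
      obtain ⟨u, w, huw⟩ := h3 n
      apply huw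
      rw [← hzdist n u w, he]
    rw [htdef]
    simpa [sub_eq_zero] using norm_pos_iff.mpr (sub_ne_zero_of_ne hne)
  have htsq : ∀ n, t n ^ 2 ≤ 4 * N * (((n : ℝ) + 1)⁻¹) ^ 2 := by
    intro n
    obtain ⟨u0, -, hu0⟩ := Finset.exists_mem_eq_sup Finset.univ
      (Finset.univ_nonempty) (fun u => ‖(z n - x) u‖₊)
    have htn : t n = ‖(z n - x) u0‖ := by
      have hnn : ‖z n - x‖₊ = ‖(z n - x) u0‖₊ := by rw [Pi.nnnorm_def, hu0]
      show ‖z n - x‖ = ‖(z n - x) u0‖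
      rw [← coe_nnnorm, ← coe_nnnorm, hnn]
    calc t n ^ 2 = ‖z n u0 - x u0‖ ^ 2 := by rw [htn, Pi.sub_apply]
      _ ≤ ∑ u, ‖z n u - x u‖ ^ 2 :=
          Finset.single_le_sum (f := fun u => ‖z n u - x u‖ ^ 2)
            (fun u _ => sq_nonneg _) (Finset.mem_univ u0)
      _ ≤ 4 * N * (((n : ℝ) + 1)⁻¹) ^ 2 := hsumz n
  have ht0 : Filter.Tendsto t Filter.atTop (nhds 0) := by
    have hbound : ∀ n, t n ≤ (2 * Real.sqrt N) * ((n : ℝ) + 1)⁻¹ := by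
      intro n
      have hsq : t n ^ 2 ≤ ((2 * Real.sqrt N) * ((n : ℝ) + 1)⁻¹) ^ 2 := by
        calc t n ^ 2 ≤ 4 * N * (((n : ℝ) + 1)⁻¹) ^ 2 := htsq n
          _ = ((2 * Real.sqrt N) * ((n : ℝ) + 1)⁻¹) ^ 2 := by
            rw [mul_pow, mul_pow, Real.sq_sqrt hN0.le]; ring
      have h2s : (0 : ℝ) ≤ (2 * Real.sqrt N) * ((n : ℝ) + 1)⁻¹ := by positivity
      have hs := Real.sqrt_le_sqrt hsq
      rwa [Real.sqrt_sq (htpos n).le, Real.sqrt_sq h2s] at hs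
    have hlim : Filter.Tendsto (fun n : ℕ => (2 * Real.sqrt N) * ((n : ℝ) + 1)⁻¹)
        Filter.atTop (nhds 0) := by
      have := tendsto_one_div_add_atTop_nhds_zero_nat.const_mul (2 * Real.sqrt N)
      simpa [one_div] using this
    exact squeeze_zero (fun n => (htpos n).le) hbound hlim
  -- normalized displacements
  set v : ℕ → V → EuclideanSpace ℝ (Fin K) := fun n => (t n)⁻¹ • (z n - x) with hvdef
  have hvnorm : ∀ n, ‖v n‖ = 1 := by
    intro n
    rw [hvdef]
    rw [norm_smul, Real.norm_eq_abs, abs_of_nonneg (inv_nonneg.mpr (htpos n).le)]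
    exact inv_mul_cancel₀ (htpos n).ne'
  have hzv : ∀ n u, z n u = x u + t n • v n u := by
    intro n u
    rw [hvdef]
    simp only [Pi.smul_apply, Pi.sub_apply, smul_smul,
      mul_inv_cancel₀ (htpos n).ne', one_smul]
    abel
  -- extract a convergent subsequence
  have hvball : ∀ n, v n ∈ Metric.closedBall (0 : V → EuclideanSpace ℝ (Fin K)) 1 := by
    intro n
    rw [mem_closedBall_zero_iff, hvnorm n]
  obtain ⟨w, -, ψ, hψmono, hψtend⟩ :=
    (isCompact_closedBall (0 : V → EuclideanSpace ℝ (Fin K)) 1).tendsto_subseq hvball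
  have htψ : Filter.Tendsto (fun n => t (ψ n)) Filter.atTop (nhds 0) :=
    ht0.comp hψmono.tendsto_atTop
  have hwp : ∀ u, Filter.Tendsto (fun n => v (ψ n) u) Filter.atTop (nhds (w u)) := by
    intro u
    exact ((continuous_apply u).tendsto w).comp hψtend
  have hwnorm : ‖w‖ = 1 := by
    have hn1 : Filter.Tendsto (fun n => ‖v (ψ n)‖) Filter.atTop (nhds ‖w‖) :=
      (continuous_norm.tendsto w).comp hψtend
    have hn2 : Filter.Tendsto (fun n => ‖v (ψ n)‖) Filter.atTop (nhds 1) := by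
      simp only [hvnorm]
      exact tendsto_const_nhds
    exact tendsto_nhds_unique hn1 hn2
  -- w is an infinitesimal motion
  have hedge : ∀ u u', G.Adj u u' → ⟪x u - x u', w u - w u'⟫ = 0 := by
    intro u u' hadj
    have hexp : ∀ n, ⟪x u - x u', v n u - v n u'⟫
        = -(t n * ‖v n u - v n u'‖ ^ 2) / 2 := by
      intro n
      have hlen : ‖(x u - x u') + t n • (v n u - v n u')‖ ^ 2 = ‖x u - x u'‖ ^ 2 := by
        have hz' : (x u - x u') + t n • (v n u - v n u') = z n u - z n u' := by
          rw [hzv n u, hzv n u', smul_sub]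
          abel
        rw [hz', hzdist n u u', h2 n u u' hadj]
      rw [norm_add_sq_real, real_inner_smul_right, norm_smul, Real.norm_eq_abs,
        abs_of_nonneg (htpos n).le, mul_pow] at hlen
      have ht2 : t n ≠ 0 := (htpos n).ne'
      have h5 : 2 * (t n * ⟪x u - x u', v n u - v n u'⟫)
          + t n ^ 2 * ‖v n u - v n u'‖ ^ 2 = 0 := by linarith [hlen]
      have h6 : t n * (2 * ⟪x u - x u', v n u - v n u'⟫
          + t n * ‖v n u - v n u'‖ ^ 2) = 0 := by ring_nf; ring_nf at h5; linarith
      have h7 := (mul_eq_zero.mp h6).resolve_left ht2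
      linarith [h7]
    have hlim1 : Filter.Tendsto (fun n => ⟪x u - x u', v (ψ n) u - v (ψ n) u'⟫)
        Filter.atTop (nhds ⟪x u - x u', w u - w u'⟫) :=
      Filter.Tendsto.inner tendsto_const_nhds ((hwp u).sub (hwp u'))
    have hlim2 : Filter.Tendsto (fun n => ⟪x u - x u', v (ψ n) u - v (ψ n) u'⟫)
        Filter.atTop (nhds 0) := by
      have hb : ∀ n, ‖⟪x u - x u', v (ψ n) u - v (ψ n) u'⟫‖ ≤ t (ψ n) * 2 := by
        intro n
        rw [hexp (ψ n)]
        have hvb : ‖v (ψ n) u - v (ψ n) u'‖ ≤ 2 := by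
          calc ‖v (ψ n) u - v (ψ n) u'‖ ≤ ‖v (ψ n) u‖ + ‖v (ψ n) u'‖ := norm_sub_le _ _
            _ ≤ ‖v (ψ n)‖ + ‖v (ψ n)‖ :=
                add_le_add (norm_le_pi_norm _ u) (norm_le_pi_norm _ u')
            _ = 2 := by rw [hvnorm]; ring
        have hb2 : ‖v (ψ n) u - v (ψ n) u'‖ ^ 2 ≤ 4 := by
          nlinarith [norm_nonneg (v (ψ n) u - v (ψ n) u')]
        have hbn : (0:ℝ) ≤ t (ψ n) * ‖v (ψ n) u - v (ψ n) u'‖ ^ 2 := by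
          have := (htpos (ψ n)).le
          positivity
        rw [Real.norm_eq_abs, abs_div, abs_neg, abs_of_nonneg hbn]
        rw [abs_of_nonneg (by norm_num : (0:ℝ) ≤ (2:ℝ))]
        nlinarith [(htpos (ψ n)).le]
      exact squeeze_zero_norm hb (by simpa [mul_comm] using htψ.const_mul 2)
    exact tendsto_nhds_unique hlim1 hlim2
  -- apply infinitesimal rigidity
  obtain ⟨A, hA, b, hAb⟩ := hinf w hedge
  have hwAb : ∀ u, w u = Matrix.toEuclideanLin A (x u) + b := by
    intro u
    ext i
    rw [hAb u i]
    have hcomp : (Matrix.toEuclideanLin A (x u)) i = (A *ᵥ x u) i := by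
      rw [Matrix.toEuclideanLin_apply]
    simp [hcomp]
  -- limit of the stationarity identities
  have hTA : Continuous (Matrix.toEuclideanLin A :
      EuclideanSpace ℝ (Fin K) → EuclideanSpace ℝ (Fin K)) :=
    LinearMap.continuous_of_finiteDimensional _
  have hstat' : ∀ n, ∑ u, ⟪Matrix.toEuclideanLin A (x u)
      + t n • Matrix.toEuclideanLin A (v n u) + b, v n u⟫ = 0 := by
    intro n
    have h0 := hstat n A hA b
    have hrw : ∀ u, ⟪Matrix.toEuclideanLin A (z n u) + b, z n u - x u⟫
        = t n * ⟪Matrix.toEuclideanLin A (x u)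
            + t n • Matrix.toEuclideanLin A (v n u) + b, v n u⟫ := by
      intro u
      have hz1 : z n u - x u = t n • v n u := by rw [hzv n u]; abel
      rw [hz1, hzv n u, map_add, map_smul, real_inner_smul_right]
    rw [Finset.sum_congr rfl fun u _ => hrw u, ← Finset.mul_sum] at h0
    exact (mul_eq_zero.mp h0).resolve_left (htpos n).ne'
  have hlimA : Filter.Tendsto (fun n => ∑ u, ⟪Matrix.toEuclideanLin A (x u)
      + t (ψ n) • Matrix.toEuclideanLin A (v (ψ n) u) + b, v (ψ n) u⟫)
      Filter.atTop (nhds (∑ u, ⟪Matrix.toEuclideanLin A (x u) + b, w u⟫)) := by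
    have heq : ∀ u, Filter.Tendsto (fun n => ⟪Matrix.toEuclideanLin A (x u)
        + t (ψ n) • Matrix.toEuclideanLin A (v (ψ n) u) + b, v (ψ n) u⟫)
        Filter.atTop (nhds ⟪Matrix.toEuclideanLin A (x u) + b, w u⟫) := by
      intro u
      have ht1 : Filter.Tendsto
          (fun n => t (ψ n) • Matrix.toEuclideanLin A (v (ψ n) u))
          Filter.atTop (nhds ((0 : ℝ) • Matrix.toEuclideanLin A (w u))) :=
        htψ.smul ((hTA.tendsto (w u)).comp (hwp u))
      rw [zero_smul] at ht1
      have ht2 : Filter.Tendsto (fun n => Matrix.toEuclideanLin A (x u)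
          + t (ψ n) • Matrix.toEuclideanLin A (v (ψ n) u) + b)
          Filter.atTop (nhds (Matrix.toEuclideanLin A (x u) + b)) := by
        have h9 := ht1.const_add (Matrix.toEuclideanLin A (x u))
        rw [add_zero] at h9
        exact h9.add_const b
      exact Filter.Tendsto.inner ht2 (hwp u)
    exact tendsto_finset_sum _ fun u _ => heq u
  have hzero : ∑ u, ⟪Matrix.toEuclideanLin A (x u) + b, w u⟫ = 0 := by
    have hconst : Filter.Tendsto (fun n => ∑ u, ⟪Matrix.toEuclideanLin A (x u)
        + t (ψ n) • Matrix.toEuclideanLin A (v (ψ n) u) + b, v (ψ n) u⟫)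
        Filter.atTop (nhds 0) := by
      simp only [hstat']
      exact tendsto_const_nhds
    exact tendsto_nhds_unique hlimA hconst
  -- contradiction
  have hwzero : ∀ u, w u = 0 := by
    have hsum : ∑ u, ⟪w u, w u⟫ = 0 := by
      rw [← hzero]
      exact Finset.sum_congr rfl fun u _ => by rw [hwAb u]
    have hall := (Finset.sum_eq_zero_iff_of_nonneg
      (fun u _ => real_inner_self_nonneg)).mp hsum
    intro u
    exact inner_self_eq_zero.mp (hall u (Finset.mem_univ u))
  have : ‖w‖ = 0 := by
    have : w = 0 := funext hwzero
    rw [this, norm_zero]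
  rw [hwnorm] at this
  exact one_ne_zero this
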